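/- Let X be an n₁×n₂ real matrix with rank r < n₁/2 and let Y be an arbitrary n₁×n₂ real matrix. Let P_X^c and P_X^r denote the orthogonal projection matrices onto the column space and row space of X, respectively. If the matrix P_X^c Y P_X^r has rank r (i.e., full rank on these r-dimensional spaces), then Y can be decomposed as Y = Y₁ + Y₂ where rank(Y₁) = r and ‖X + Y₂‖_* = ‖X‖_* + ‖Y₂‖_*. -/

import Mathlib

open Matrix

/-- The nuclear norm of a real matrix: the sum of its singular values,
i.e. the sum of the square roots of the eigenvalues of `Xᵀ * X`. -/
noncomputable def nuclearNorm {m n : Type*} [Fintype m] [Fintype n] [DecidableEq n]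
    (X : Matrix m n ℝ) : ℝ :=
  ∑ i, Real.sqrt (((by simpa using Matrix.isHermitian_conjTranspose_mul_self X : (Xᵀ * X).IsHermitian)).eigenvalues i)

section Helpers

variable {n : Type*} [Fintype n] [DecidableEq n]

noncomputable def Matrix.PosSemidef.sqrt {A : Matrix n n ℝ} (hA : A.PosSemidef) : Matrix n n ℝ :=
  hA.1.cfc Real.sqrt

open scoped MatrixOrder in
lemma Matrix.PosSemidef.sqrt_eq_cfc {A : Matrix n n ℝ} (hA : A.PosSemidef) :
    hA.sqrt = CFC.sqrt A := by
  rw [CFC.sqrt_eq_real_sqrt A hA.nonneg, cfcₙ_eq_cfc, hA.1.cfc_eq]; rfl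

open scoped MatrixOrder in
lemma Matrix.PosSemidef.posSemidef_sqrt {A : Matrix n n ℝ} (hA : A.PosSemidef) :
    hA.sqrt.PosSemidef := by
  rw [hA.sqrt_eq_cfc]; exact (CFC.sqrt_nonneg A).posSemidef

open scoped MatrixOrder in
lemma Matrix.PosSemidef.sqrt_mul_self {A : Matrix n n ℝ} (hA : A.PosSemidef) :
    hA.sqrt * hA.sqrt = A := by
  rw [hA.sqrt_eq_cfc]; exact CFC.sqrt_mul_sqrt_self A hA.nonneg

open scoped MatrixOrder in
lemma Matrix.PosSemidef.eq_sqrt_of_sq_eq {A B : Matrix n n ℝ} (hB : B.PosSemidef)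
    (hA : A.PosSemidef) (h : B ^ 2 = A) : B = hA.sqrt := by
  rw [hA.sqrt_eq_cfc]; exact (CFC.sqrt_unique (by rw [← sq]; exact h) hB.nonneg).symm

lemma myCfc_mul {A : Matrix n n ℝ} (hA : A.IsHermitian) (f g : ℝ → ℝ) :
    hA.cfc f * hA.cfc g = hA.cfc (fun x => f x * g x) := by
  simp only [Matrix.IsHermitian.cfc, Unitary.conjStarAlgAut_apply, Matrix.mul_assoc]
  rw [← Matrix.mul_assoc (star (hA.eigenvectorUnitary : Matrix n n ℝ)),
    UnitaryGroup.star_mul_self, Matrix.one_mul,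
    ← Matrix.mul_assoc (diagonal _), diagonal_mul_diagonal]
  congr 2

lemma myCfc_id {A : Matrix n n ℝ} (hA : A.IsHermitian) : hA.cfc (fun x => x) = A := by
  conv_rhs => rw [hA.spectral_theorem]
  rfl

lemma myCfc_trace {A : Matrix n n ℝ} (hA : A.IsHermitian) (f : ℝ → ℝ) :
    (hA.cfc f).trace = ∑ i, f (hA.eigenvalues i) := by
  rw [Matrix.IsHermitian.cfc, Unitary.conjStarAlgAut_apply, Matrix.trace_mul_cycle,
    UnitaryGroup.star_mul_self, Matrix.one_mul, trace_diagonal]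
  rfl

lemma myCfc_mul_eq_zero {A B : Matrix n n ℝ} (hA : A.IsHermitian) (hAB : A * B = 0)
    (f : ℝ → ℝ) (hf : f 0 = 0) : hA.cfc f * B = 0 := by
  set g : ℝ → ℝ := fun x => if x = 0 then 0 else f x * x⁻¹ with hg
  have hfg : f = fun x => g x * x := by
    funext x
    by_cases h : x = 0
    · simp [h, hg, hf]
    · simp [hg, h]
  rw [hfg, ← myCfc_mul hA g (fun x => x), myCfc_id, Matrix.mul_assoc, hAB, Matrix.mul_zero]

lemma sqrt_trace_eq {A : Matrix n n ℝ} (hA : A.PosSemidef) :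
    hA.sqrt.trace = ∑ i, Real.sqrt (hA.1.eigenvalues i) :=
  myCfc_trace hA.1 Real.sqrt

lemma sqrt_mul_sqrt_eq_zero {A B : Matrix n n ℝ} (hA : A.PosSemidef) (hB : B.PosSemidef)
    (hAB : A * B = 0) : hA.sqrt * hB.sqrt = 0 := by
  have h1 : hA.sqrt * B = 0 := myCfc_mul_eq_zero hA.1 hAB Real.sqrt Real.sqrt_zero
  set g : ℝ → ℝ := fun x => if x = 0 then 0 else Real.sqrt x * x⁻¹ with hg
  have hfg : Real.sqrt = fun x => x * g x := by
    funext x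
    by_cases h : x = 0
    · simp [h, hg]
    · simp [hg, h]
      field_simp
  have : hB.sqrt = B * hB.1.cfc g := by
    show hB.1.cfc Real.sqrt = _
    rw [hfg, ← myCfc_mul hB.1 (fun x => x) g, myCfc_id]
  rw [this, ← Matrix.mul_assoc, h1, Matrix.zero_mul]

lemma psd_sqrt_trace_congr {M N : Matrix n n ℝ} (h : M = N) (hM : M.PosSemidef)
    (hN : N.PosSemidef) : hM.sqrt.trace = hN.sqrt.trace := by subst h; rfl

lemma nuclear_add {m n' : Type*} [Fintype m] [Fintype n'] [DecidableEq n']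
    (X Z : Matrix m n' ℝ) (h1 : Xᴴ * Z = 0) (h2 : X * Zᴴ = 0) :
    nuclearNorm (X + Z) = nuclearNorm X + nuclearNorm Z := by
  have hA := Matrix.posSemidef_conjTranspose_mul_self X
  have hB := Matrix.posSemidef_conjTranspose_mul_self Z
  have hZX : Zᴴ * X = 0 := by
    have := congrArg Matrix.conjTranspose h1
    simpa using this
  have hXZ' : Z * Xᴴ = 0 := by
    have := congrArg Matrix.conjTranspose h2
    simpa using this
  have hAB : (Xᴴ * X) * (Zᴴ * Z) = 0 := by
    calc (Xᴴ * X) * (Zᴴ * Z) = Xᴴ * ((X * Zᴴ) * Z) := by simp only [Matrix.mul_assoc]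
    _ = 0 := by rw [h2, Matrix.zero_mul, Matrix.mul_zero]
  have hBA : (Zᴴ * Z) * (Xᴴ * X) = 0 := by
    calc (Zᴴ * Z) * (Xᴴ * X) = Zᴴ * ((Z * Xᴴ) * X) := by simp only [Matrix.mul_assoc]
    _ = 0 := by rw [hXZ', Matrix.zero_mul, Matrix.mul_zero]
  have h12 : hA.sqrt * hB.sqrt = 0 := sqrt_mul_sqrt_eq_zero hA hB hAB
  have h21 : hB.sqrt * hA.sqrt = 0 := sqrt_mul_sqrt_eq_zero hB hA hBA
  have hS : (hA.sqrt + hB.sqrt).PosSemidef := hA.posSemidef_sqrt.add hB.posSemidef_sqrt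
  have hABps : (Xᴴ * X + Zᴴ * Z).PosSemidef := hA.add hB
  have hsq : (hA.sqrt + hB.sqrt) ^ 2 = Xᴴ * X + Zᴴ * Z := by
    rw [pow_two, add_mul, mul_add, mul_add, h12, h21, hA.sqrt_mul_self, hB.sqrt_mul_self]
    simp
  have hkey : hA.sqrt + hB.sqrt = hABps.sqrt := hS.eq_sqrt_of_sq_eq hABps hsq
  have hsum : (X + Z)ᴴ * (X + Z) = Xᴴ * X + Zᴴ * Z := by
    rw [Matrix.conjTranspose_add, Matrix.add_mul, Matrix.mul_add, Matrix.mul_add, h1, hZX]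
    simp
  calc nuclearNorm (X + Z)
      = (Matrix.posSemidef_conjTranspose_mul_self (X + Z)).sqrt.trace :=
        (sqrt_trace_eq _).symm
    _ = hABps.sqrt.trace := psd_sqrt_trace_congr hsum _ _
    _ = (hA.sqrt + hB.sqrt).trace := by rw [hkey]
    _ = hA.sqrt.trace + hB.sqrt.trace := Matrix.trace_add _ _
    _ = nuclearNorm X + nuclearNorm Z := by rw [sqrt_trace_eq, sqrt_trace_eq]; rfl

lemma mulVecLin_inj {m : Type*} [Fintype m]
    {M N : Matrix m n ℝ} (h : M.mulVecLin = N.mulVecLin) : M = N :=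
  Matrix.toLin'.injective (by rw [Matrix.toLin'_apply', Matrix.toLin'_apply', h])

lemma proj_fix {m k : Type*} [Fintype m] [Fintype k] [DecidableEq m] [DecidableEq k]
    (P : Matrix m m ℝ) (M : Matrix m k ℝ) (hP : P * P = P)
    (h : LinearMap.range M.mulVecLin ≤ LinearMap.range P.mulVecLin) : P * M = M := by
  apply mulVecLin_inj
  rw [Matrix.mulVecLin_mul]
  refine LinearMap.ext fun v => ?_
  obtain ⟨w, hw⟩ := h (LinearMap.mem_range_self M.mulVecLin v)
  simp only [LinearMap.comp_apply]
  rw [← hw]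
  simp only [Matrix.mulVecLin_apply, Matrix.mulVec_mulVec, hP]

lemma exists_left_factor {n₁ n₂ : ℕ} (K : Matrix (Fin n₁) (Fin n₂) ℝ)
    (P : Matrix (Fin n₂) (Fin n₂) ℝ)
    (hle : LinearMap.ker P.mulVecLin ≤ LinearMap.ker K.mulVecLin)
    (hrk : Module.finrank ℝ (LinearMap.range K.mulVecLin)
         = Module.finrank ℝ (LinearMap.range P.mulVecLin)) :
    ∃ Kp : Matrix (Fin n₂) (Fin n₁) ℝ, Kp * K = P := by
  set f := K.mulVecLin
  set p := P.mulVecLin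
  have h1 := LinearMap.finrank_range_add_finrank_ker f
  have h2 := LinearMap.finrank_range_add_finrank_ker p
  have hker : LinearMap.ker p = LinearMap.ker f :=
    Submodule.eq_of_le_of_finrank_eq hle (by omega)
  set q : ((Fin n₂ → ℝ) ⧸ LinearMap.ker f) →ₗ[ℝ] (Fin n₂ → ℝ) :=
    (LinearMap.ker f).liftQ p hker.ge
  set e := f.quotKerEquivRange
  obtain ⟨g, hg⟩ := LinearMap.exists_extend (q ∘ₗ (e.symm : LinearMap.range f →ₗ[ℝ] _))
  refine ⟨LinearMap.toMatrix' g, ?_⟩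
  apply mulVecLin_inj
  rw [Matrix.mulVecLin_mul, ← Matrix.toLin'_apply', Matrix.toLin'_toMatrix']
  refine LinearMap.ext fun v => ?_
  have hv : f v ∈ LinearMap.range f := LinearMap.mem_range_self f v
  have h3 : g (f v) = (q ∘ₗ (e.symm : LinearMap.range f →ₗ[ℝ] _)) ⟨f v, hv⟩ := by
    rw [← hg]; rfl
  have h4 : e.symm ⟨f v, hv⟩ = (LinearMap.ker f).mkQ v :=
    f.quotKerEquivRange_symm_apply_image v hv
  simp only [LinearMap.comp_apply]
  rw [h3]
  simp only [LinearMap.comp_apply, LinearEquiv.coe_coe, h4]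
  exact Submodule.liftQ_apply _ p v

end Helpers

/-- If `X` has rank `r < n₁/2`, `Pc`/`Pr` are the orthogonal projections onto the
column and row spaces of `X`, and `Pc * Y * Pr` has rank `r`, then `Y = Y₁ + Y₂`
with `rank Y₁ = r` and `‖X + Y₂‖_* = ‖X‖_* + ‖Y₂‖_*`. -/
theorem stmt3 (n₁ n₂ r : ℕ) (hr : 2 * r < n₁)
    (X Y : Matrix (Fin n₁) (Fin n₂) ℝ) (hrank : X.rank = r)
    (Pc : Matrix (Fin n₁) (Fin n₁) ℝ) (Pr : Matrix (Fin n₂) (Fin n₂) ℝ)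
    (hPcSymm : Pcᵀ = Pc) (hPcIdem : Pc * Pc = Pc)
    (hPcRange : LinearMap.range Pc.mulVecLin = LinearMap.range X.mulVecLin)
    (hPrSymm : Prᵀ = Pr) (hPrIdem : Pr * Pr = Pr)
    (hPrRange : LinearMap.range Pr.mulVecLin = LinearMap.range Xᵀ.mulVecLin)
    (hfull : (Pc * Y * Pr).rank = r) :
    ∃ Y₁ Y₂ : Matrix (Fin n₁) (Fin n₂) ℝ, Y = Y₁ + Y₂ ∧ Y₁.rank = r ∧
      nuclearNorm (X + Y₂) = nuclearNorm X + nuclearNorm Y₂ := by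
  have hPcX : Pc * X = X := proj_fix Pc X hPcIdem hPcRange.ge
  have hPrXt : Pr * Xᵀ = Xᵀ := proj_fix Pr Xᵀ hPrIdem hPrRange.ge
  have hXtPc : Xᵀ * Pc = Xᵀ := by
    have h := congrArg Matrix.transpose hPcX
    rw [Matrix.transpose_mul, hPcSymm] at h
    exact h
  have hrPc : Pc.rank = r := by
    have h1 : Pc.rank = X.rank :=
      congrArg (fun S : Submodule ℝ (Fin n₁ → ℝ) => Module.finrank ℝ S) hPcRange
    rw [h1, hrank]
  have hrPr : Pr.rank = r := by
    have h1 : Pr.rank = Xᵀ.rank :=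
      congrArg (fun S : Submodule ℝ (Fin n₂ → ℝ) => Module.finrank ℝ S) hPrRange
    rw [h1, Matrix.rank_transpose, hrank]
  -- construct the partial left inverse Kp of Pc * Y * Pr
  have hle : LinearMap.ker Pr.mulVecLin ≤ LinearMap.ker (Pc * Y * Pr).mulVecLin := by
    intro v hv
    rw [LinearMap.mem_ker] at hv ⊢
    rw [Matrix.mulVecLin_mul, LinearMap.comp_apply, hv, map_zero]
  have hrkeq : Module.finrank ℝ (LinearMap.range (Pc * Y * Pr).mulVecLin)
      = Module.finrank ℝ (LinearMap.range Pr.mulVecLin) := by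
    have : (Pc * Y * Pr).rank = Pr.rank := by rw [hfull, hrPr]
    exact this
  obtain ⟨Kp, hKp⟩ := exists_left_factor (Pc * Y * Pr) Pr hle hrkeq
  set T := Y * Pr * Kp with hT
  set Y₁ := Pc * Y + (1 - Pc) * T * (Pc * Y) with hY₁
  set Y₂ := Y - Y₁ with hY₂
  have hrankY₁ : Y₁.rank = r := by
    have hfactor : Y₁ = (Pc + (1 - Pc) * T) * (Pc * Y) := by
      rw [hY₁, Matrix.add_mul, ← Matrix.mul_assoc Pc Pc Y, hPcIdem]
    have hle1 : Y₁.rank ≤ r := by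
      rw [hfactor]
      calc ((Pc + (1 - Pc) * T) * (Pc * Y)).rank ≤ (Pc * Y).rank :=
            Matrix.rank_mul_le_right _ _
        _ ≤ Pc.rank := Matrix.rank_mul_le_left _ _
        _ = r := hrPc
    have hPcY₁ : Pc * Y₁ = Pc * Y := by
      have h0 : Pc * (1 - Pc) = 0 := by
        rw [Matrix.mul_sub, Matrix.mul_one, hPcIdem, sub_self]
      rw [hY₁, Matrix.mul_add, ← Matrix.mul_assoc Pc Pc Y, hPcIdem,
        ← Matrix.mul_assoc Pc ((1 - Pc) * T) (Pc * Y),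
        ← Matrix.mul_assoc Pc (1 - Pc) T, h0, Matrix.zero_mul, Matrix.zero_mul, add_zero]
    have hge1 : r ≤ Y₁.rank := by
      calc r = (Pc * Y * Pr).rank := hfull.symm
        _ = (Pc * Y₁ * Pr).rank := by rw [hPcY₁]
        _ ≤ (Y₁ * Pr).rank := by
            rw [Matrix.mul_assoc]
            exact Matrix.rank_mul_le_right _ _
        _ ≤ Y₁.rank := Matrix.rank_mul_le_left _ _
    exact le_antisymm hle1 hge1
  have hY₂eq : Y₂ = (1 - Pc) * (Y - T * (Pc * Y)) := by
    rw [hY₂, hY₁]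
    simp only [Matrix.sub_mul, Matrix.mul_sub, Matrix.one_mul, ← Matrix.mul_assoc]
    abel
  have hXtQc : Xᵀ * (1 - Pc) = 0 := by
    rw [Matrix.mul_sub, Matrix.mul_one, hXtPc, sub_self]
  have h1 : Xᵀ * Y₂ = 0 := by
    rw [hY₂eq, ← Matrix.mul_assoc, hXtQc, Matrix.zero_mul]
  have hY₂Pr : Y₂ * Pr = 0 := by
    have hcore : (Y - T * (Pc * Y)) * Pr = 0 := by
      rw [Matrix.sub_mul]
      have hx : T * (Pc * Y) * Pr = Y * Pr := by
        calc T * (Pc * Y) * Pr = Y * Pr * (Kp * (Pc * Y * Pr)) := by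
              rw [hT]; simp only [Matrix.mul_assoc]
          _ = Y * Pr * Pr := by rw [hKp]
          _ = Y * (Pr * Pr) := by rw [Matrix.mul_assoc]
          _ = Y * Pr := by rw [hPrIdem]
      rw [hx, sub_self]
    rw [hY₂eq, Matrix.mul_assoc, hcore, Matrix.mul_zero]
  have hY₂Xt : Y₂ * Xᵀ = 0 := by
    rw [← hPrXt, ← Matrix.mul_assoc, hY₂Pr, Matrix.zero_mul]
  have h2 : X * Y₂ᵀ = 0 := by
    have h := congrArg Matrix.transpose hY₂Xt
    rw [Matrix.transpose_mul, Matrix.transpose_transpose] at h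
    simpa using h
  have h1' : Xᴴ * Y₂ = 0 := by
    rw [Matrix.conjTranspose_eq_transpose_of_trivial]; exact h1
  have h2' : X * Y₂ᴴ = 0 := by
    rw [Matrix.conjTranspose_eq_transpose_of_trivial]; exact h2
  exact ⟨Y₁, Y₂, by rw [hY₂]; abel, hrankY₁, nuclear_add X Y₂ h1' h2'⟩
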